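/- For every real α in (0,1] and every integer k' ≥ 1, setting γ = α/(α+1), we have 1/k' + (1 - 1/k')·(1 + (2·k'^γ)^{1/α})^{-α} ≥ 1/(2·(k'+1)^γ). -/

import Mathlib

private lemma stmt_1_aux (α K A t : ℝ) (hα1 : α ≤ 1) (hK1 : 1 ≤ K)
    (hA0 : 0 < A) (hA1 : 1 ≤ A) (ht0 : 0 < t) (htK : t * K = A) :
    1 / (2 * A) ≤ 1 / K + (1 - 1 / K) * ((1 / (2 * A)) * (1 - α * (t / 2))) := by
  have hK0 : (0:ℝ) < K := lt_of_lt_of_le one_pos hK1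
  rw [← sub_nonneg]
  have heq : 1 / K + (1 - 1 / K) * ((1 / (2 * A)) * (1 - α * (t / 2))) - 1 / (2 * A)
      = (2 * A + (K - 1) * (1 - α * (t / 2)) - K) / (2 * A * K) := by
    field_simp
  rw [heq]
  apply div_nonneg _ (le_of_lt (by nlinarith))
  nlinarith [mul_nonneg (mul_nonneg (by linarith : (0:ℝ) ≤ 1 - α) ht0.le)
    (by linarith : (0:ℝ) ≤ K - 1), htK, hA1, ht0.le]

theorem stmt_1 (α : ℝ) (hα : α ∈ Set.Ioc (0:ℝ) 1) (k' : ℕ) (hk : 1 ≤ k')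
    (γ : ℝ) (hγ : γ = α / (α + 1)) :
    1 / (k' : ℝ) + (1 - 1 / (k' : ℝ)) * (1 + (2 * (k' : ℝ) ^ γ) ^ (1 / α)) ^ (-α)
      ≥ 1 / (2 * ((k' : ℝ) + 1) ^ γ) := by
  obtain ⟨hα0, hα1⟩ := hα
  set K : ℝ := (k' : ℝ) with hKdef
  have hK1 : (1:ℝ) ≤ K := by rw [hKdef]; exact_mod_cast hk
  have hK0 : (0:ℝ) < K := lt_of_lt_of_le one_pos hK1
  have hα1' : (0:ℝ) < α + 1 := by linarith
  have hαne : α ≠ 0 := ne_of_gt hα0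
  have hα1ne : α + 1 ≠ 0 := ne_of_gt hα1'
  have hγ0 : 0 < γ := by rw [hγ]; positivity
  have hγ1 : γ < 1 := by rw [hγ, div_lt_one hα1']; linarith
  have hid1 : γ * (1 / α) = 1 - γ := by
    rw [hγ]; field_simp; ring
  have hid2 : (1 - γ) * α = γ := by
    rw [hγ]; field_simp; ring
  set A : ℝ := K ^ γ with hAdef
  set t : ℝ := K ^ (γ - 1) with htdef
  have hA0 : 0 < A := Real.rpow_pos_of_pos hK0 _
  have hA1 : 1 ≤ A := Real.one_le_rpow hK1 hγ0.le
  have ht0 : 0 < t := Real.rpow_pos_of_pos hK0 _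
  have ht1 : t ≤ 1 := Real.rpow_le_one_of_one_le_of_nonpos hK1 (by linarith)
  have htK : t * K = A := by
    rw [htdef, hAdef, ← Real.rpow_add_one hK0.ne', sub_add_cancel]
  -- rewrite the inner power
  have hy : (2 * A) ^ (1 / α) = 2 ^ (1 / α) * K ^ (1 - γ) := by
    rw [hAdef, Real.mul_rpow (by norm_num) (Real.rpow_pos_of_pos hK0 _).le,
      ← Real.rpow_mul hK0.le, hid1]
  have h2α : (2:ℝ) ≤ 2 ^ (1 / α) := by
    calc (2:ℝ) = 2 ^ (1:ℝ) := (Real.rpow_one 2).symm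
    _ ≤ 2 ^ (1 / α) := Real.rpow_le_rpow_of_exponent_le one_le_two
        ((le_div_iff₀ hα0).2 (by linarith))
  have hKpow : K ^ (1 - γ) * t = 1 := by
    rw [htdef, ← Real.rpow_add hK0]; norm_num
  have hKpow0 : (0:ℝ) < K ^ (1 - γ) := Real.rpow_pos_of_pos hK0 _
  -- Step B : 1 + y ≤ 2^(1/α) K^(1-γ) (1 + t/2)
  have hB : 1 + (2 * A) ^ (1 / α) ≤ 2 ^ (1 / α) * K ^ (1 - γ) * (1 + t / 2) := by
    rw [hy]
    have heq : 2 ^ (1 / α) * K ^ (1 - γ) * (1 + t / 2)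
        = 2 ^ (1 / α) * K ^ (1 - γ) + (2 ^ (1 / α) / 2) * (K ^ (1 - γ) * t) := by ring
    rw [heq, hKpow]
    linarith
  -- Step C : lower bound the (-α) power
  have h2p : (0:ℝ) < 2 ^ (1 / α) := Real.rpow_pos_of_pos two_pos _
  have htp : (0:ℝ) < 1 + t / 2 := by linarith
  have hpos1 : (0:ℝ) < 1 + (2 * A) ^ (1 / α) := by
    have := Real.rpow_pos_of_pos (by linarith : (0:ℝ) < 2 * A) (1 / α); linarith
  have hC : (2 ^ (1 / α) * K ^ (1 - γ) * (1 + t / 2)) ^ (-α)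
      ≤ (1 + (2 * A) ^ (1 / α)) ^ (-α) :=
    Real.rpow_le_rpow_of_nonpos hpos1 hB (by linarith)
  -- compute the left side of hC
  have hsplit : (2 ^ (1 / α) * K ^ (1 - γ) * (1 + t / 2)) ^ (-α)
      = (1 / (2 * A)) * (1 + t / 2) ^ (-α) := by
    rw [Real.mul_rpow (mul_pos h2p hKpow0).le htp.le,
      Real.mul_rpow h2p.le hKpow0.le,
      ← Real.rpow_mul (by norm_num : (0:ℝ) ≤ 2),
      ← Real.rpow_mul hK0.le]
    have e1 : 1 / α * -α = -1 := by field_simp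
    have e2 : (1 - γ) * -α = -γ := by linear_combination -hid2
    rw [e1, e2, Real.rpow_neg_one, Real.rpow_neg hK0.le, ← hAdef]
    rw [one_div, mul_inv]
  -- Step D : Bernoulli
  have hD : 1 - α * (t / 2) ≤ (1 + t / 2) ^ (-α) := by
    have hb : (1 + t / 2) ^ α ≤ 1 + α * (t / 2) :=
      rpow_one_add_le_one_add_mul_self (by linarith) hα0.le hα1
    have h1 : 0 < (1 + t / 2) ^ α := Real.rpow_pos_of_pos (by linarith) _
    rw [Real.rpow_neg (by linarith : (0:ℝ) ≤ 1 + t / 2), ← one_div]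
    calc 1 - α * (t / 2) ≤ 1 / (1 + α * (t / 2)) := by
          rw [le_div_iff₀ (by positivity)]; nlinarith [sq_nonneg (α * (t / 2))]
    _ ≤ 1 / ((1 + t / 2) ^ α) := one_div_le_one_div_of_le h1 hb
  clear_value K A t
  -- middle algebraic inequality
  have hmid := stmt_1_aux α K A t hα1 hK1 hA0 hA1 ht0 htK
  -- assemble
  have h1K : 0 ≤ 1 - 1 / K := by
    have : 1 / K ≤ 1 := by rw [div_le_one hK0]; exact hK1
    linarith
  have hchain : 1 / (2 * A) ≤ 1 / K + (1 - 1 / K) * (1 + (2 * A) ^ (1 / α)) ^ (-α) := by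
    refine hmid.trans ?_
    have step1 : (1 / (2 * A)) * (1 - α * (t / 2)) ≤ (1 / (2 * A)) * (1 + t / 2) ^ (-α) :=
      mul_le_mul_of_nonneg_left hD (le_of_lt (by positivity))
    have step2 : (1 / (2 * A)) * (1 + t / 2) ^ (-α) ≤ (1 + (2 * A) ^ (1 / α)) ^ (-α) := by
      rw [← hsplit]; exact hC
    exact add_le_add_right (mul_le_mul_of_nonneg_left (step1.trans step2) h1K) _
  have hfin : 1 / (2 * (K + 1) ^ γ) ≤ 1 / (2 * A) := by
    have h := Real.rpow_le_rpow hK0.le (by linarith : K ≤ K + 1) hγ0.le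
    apply one_div_le_one_div_of_le (by linarith) (by linarith)
  exact le_trans hfin hchain
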